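/- arXiv:2208.08223 — 3 statements merged into one kernel-verified Lean document; each statement's English description precedes it below -/
import Mathlib

section
/- For the Euclidean lattice harmonic oscillator, the expectation ⟨Φ²⟩_E := (∫_{ℝ^τ} e^{−⟨Φ,ΣΦ⟩} (1/τ)Σ_{k} Φ_k² dΦ) / (∫_{ℝ^τ} e^{−⟨Φ,ΣΦ⟩} dΦ) equals (1/(2τ)) Σ_{k=0}^{τ−1} λ_k², where λ_k² = ( a m ω²/(2ħ) + (m/(aħ))(1 − cos(2πk/τ)) )^{−1}. -/
open MeasureTheory Real Matrix

lemma gauss_sq_aux {b : ℝ} (hb : 0 < b) :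
    ∫ x : ℝ, x ^ 2 * Real.exp (-b * x ^ 2) = 1 / (2 * b) * Real.sqrt (π / b) := by
  have h1 : ∫ x : ℝ, x ^ 2 * Real.exp (-b * x ^ 2)
      = 2 * ∫ x in Set.Ioi (0:ℝ), x ^ 2 * Real.exp (-b * x ^ 2) := by
    rw [← integral_comp_abs (f := fun x => x ^ 2 * Real.exp (-b * x ^ 2))]
    congr 1; ext x; rw [sq_abs]
  have h2 : ∫ x in Set.Ioi (0:ℝ), x ^ 2 * Real.exp (-b * x ^ 2)
      = b ^ (-(3:ℝ)/2) * (1/2) * Real.Gamma (3/2) := by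
    have := integral_rpow_mul_exp_neg_mul_rpow (p := 2) (q := 2) (by norm_num) (by norm_num) hb
    norm_num at this
    rw [show (-(3:ℝ)/2) = -(3/2) by norm_num]
    rw [← this]
    refine setIntegral_congr_fun measurableSet_Ioi (fun x hx => ?_)
    rw [← Real.rpow_natCast x 2]
    norm_num
  have hG : Real.Gamma (3/2) = Real.sqrt π / 2 := by
    rw [show (3:ℝ)/2 = 1/2 + 1 by norm_num, Real.Gamma_add_one (by norm_num),
      Real.Gamma_one_half_eq]; ring
  rw [h1, h2, hG]
  have hb3 : b ^ (-(3:ℝ)/2) = (1 / b) * (Real.sqrt b)⁻¹ := by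
    rw [show -(3:ℝ)/2 = (-1) + (-(1/2)) by norm_num, Real.rpow_add hb,
      Real.rpow_neg_one, Real.rpow_neg hb.le, ← Real.sqrt_eq_rpow]
    ring
  rw [hb3, Real.sqrt_div' π hb.le]
  have : Real.sqrt b ≠ 0 := ne_of_gt (Real.sqrt_pos.mpr hb)
  field_simp

section
variable {τ : ℕ} [NeZero τ]

lemma exp_mod (k : Fin τ) (n : ℕ) :
    Complex.exp (((2 * π * k * ((n % τ : ℕ) : ℝ) / τ : ℝ)) * Complex.I)
      = Complex.exp (((2 * π * k * (n : ℝ) / τ : ℝ)) * Complex.I) := by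
  have hτ : (τ : ℝ) ≠ 0 := Nat.cast_ne_zero.mpr (NeZero.ne τ)
  set q : ℕ := n / τ with hq
  have hn : ((n % τ : ℕ) : ℝ) = (n : ℝ) - τ * (q : ℝ) := by
    have h0 : τ * q + n % τ = n := Nat.div_add_mod n τ
    have h1 : ((τ * q + n % τ : ℕ) : ℝ) = (n : ℝ) := by rw [h0]
    push_cast at h1
    linarith
  have key : ((2 * π * k * ((n % τ : ℕ) : ℝ) / τ : ℝ) : ℂ) * Complex.I
      = ((2 * π * k * (n : ℝ) / τ : ℝ) : ℂ) * Complex.I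
        + ((-(k * q : ℤ)) : ℤ) * (2 * π * Complex.I) := by
    have h : (2 * π * (k : ℝ) * ((n % τ : ℕ) : ℝ) / τ : ℝ)
        = (2 * π * k * (n : ℝ) / τ : ℝ) + ((-((k : ℕ) * q : ℕ) : ℤ) : ℝ) * (2 * π) := by
      rw [hn]; push_cast; field_simp; ring
    calc ((2 * π * k * ((n % τ : ℕ) : ℝ) / τ : ℝ) : ℂ) * Complex.I
        = (((2 * π * k * (n : ℝ) / τ : ℝ) + ((-((k : ℕ) * q : ℕ) : ℤ) : ℝ) * (2 * π) : ℝ) : ℂ)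
          * Complex.I := by rw [← h]
      _ = _ := by push_cast; ring
  rw [key, Complex.exp_add, Complex.exp_int_mul_two_pi_mul_I, mul_one]

lemma fin_val_add_one (r : Fin τ) : ((r + 1 : Fin τ) : ℕ) = ((r : ℕ) + 1) % τ := by
  rw [Fin.add_def, Fin.val_one']
  conv_rhs => rw [Nat.add_mod, Nat.mod_eq_of_lt r.is_lt]

lemma fin_succ_iff (j r : Fin τ) : ((j : ℕ) = ((r : ℕ) + 1) % τ) ↔ j = r + 1 := by
  rw [Fin.ext_iff, fin_val_add_one]

end

section
variable {τ : ℕ} [NeZero τ]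

noncomputable def vv (τ : ℕ) (k j : Fin τ) : ℂ :=
  Complex.exp ((2 * π * k * j / τ : ℝ) * Complex.I)

lemma vv_ne_zero (k j : Fin τ) : vv τ k j ≠ 0 := Complex.exp_ne_zero _

lemma vv_shift (k r : Fin τ) :
    vv τ k (r + 1) = Complex.exp ((2 * π * k / τ : ℝ) * Complex.I) * vv τ k r := by
  unfold vv
  rw [← Complex.exp_add]
  have h1 : ((2 * π * k * ((r + 1 : Fin τ) : ℕ) / τ : ℝ)) = (2 * π * k * ((((r:ℕ)+1) % τ : ℕ) : ℝ) / τ : ℝ) := by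
    rw [fin_val_add_one]
  rw [show ((2 * π * (k:ℝ) * (((r + 1 : Fin τ)) : ℕ) / τ : ℝ) : ℂ) * Complex.I
      = ((2 * π * (k:ℝ) * ((((r:ℕ)+1) % τ : ℕ) : ℝ) / τ : ℝ) : ℂ) * Complex.I by rw [h1],
    exp_mod k ((r:ℕ)+1)]
  congr 1
  push_cast
  ring

end

lemma vv_orth {τ : ℕ} [NeZero τ] (p q : Fin τ) :
    ∑ k : Fin τ, vv τ k p * (vv τ k q)⁻¹ = if p = q then (τ:ℂ) else 0 := by
  have hτ0 : 0 < τ := Nat.pos_of_ne_zero (NeZero.ne τ)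
  have hτR : (τ:ℝ) ≠ 0 := Nat.cast_ne_zero.mpr (NeZero.ne τ)
  set β : ℝ := 2 * π * ((p:ℕ):ℝ) / τ - 2 * π * ((q:ℕ):ℝ) / τ with hβ
  set z : ℂ := Complex.exp ((β:ℝ) * Complex.I) with hz
  have hterm : ∀ k : Fin τ, vv τ k p * (vv τ k q)⁻¹ = z ^ (k:ℕ) := by
    intro k
    rw [hz, ← Complex.exp_nat_mul]
    unfold vv
    rw [← Complex.exp_neg, ← Complex.exp_add]
    congr 1
    rw [hβ]; push_cast; ring
  simp_rw [hterm]
  rw [Fin.sum_univ_eq_sum_range (fun k => z ^ k) τ]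
  by_cases hpq : p = q
  · subst hpq
    have hz1 : z = 1 := by
      rw [hz, show β = 0 by rw [hβ, sub_self]]
      simp
    rw [hz1, if_pos rfl]
    simp
  · rw [if_neg hpq]
    have hvne : ((p:ℕ):ℤ) ≠ ((q:ℕ):ℤ) := by
      simpa using fun h => hpq (Fin.ext (by exact_mod_cast h))
    have hzτ : z ^ τ = 1 := by
      rw [hz, ← Complex.exp_nat_mul]
      have : (τ:ℂ) * ((β:ℝ) * Complex.I) = (((p:ℕ):ℤ) - ((q:ℕ):ℤ) : ℤ) * (2 * π * Complex.I) := by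
        have hτC : (τ:ℂ) ≠ 0 := Nat.cast_ne_zero.mpr (NeZero.ne τ)
        rw [hβ]
        push_cast
        field_simp
      rw [this, Complex.exp_int_mul_two_pi_mul_I]
    have hz1 : z ≠ 1 := by
      intro h
      rw [hz, Complex.exp_eq_one_iff] at h
      obtain ⟨n, hn⟩ := h
      have h2 : ((β:ℝ):ℂ) * Complex.I = ((2 * π * (n:ℝ) : ℝ):ℂ) * Complex.I := by
        rw [hn]; push_cast; ring
      have h3 : β = 2 * π * (n:ℝ) :=
        Complex.ofReal_inj.mp (mul_right_cancel₀ Complex.I_ne_zero h2)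
      rw [hβ] at h3
      have h4 : ((p:ℕ):ℝ) - ((q:ℕ):ℝ) = (n:ℝ) * τ := by
        field_simp at h3
        nlinarith [Real.pi_pos]
      have h5 : ((p:ℕ):ℤ) - ((q:ℕ):ℤ) = n * τ := by exact_mod_cast h4
      have hp' : ((p:ℕ):ℤ) < τ := by exact_mod_cast p.is_lt
      have hq' : ((q:ℕ):ℤ) < τ := by exact_mod_cast q.is_lt
      have hp0 : (0:ℤ) ≤ ((p:ℕ):ℤ) := by positivity
      have hq0 : (0:ℤ) ≤ ((q:ℕ):ℤ) := by positivity
      have hτ' : (1:ℤ) ≤ τ := by exact_mod_cast hτ0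
      rcases lt_trichotomy n 0 with h | h | h
      · nlinarith [mul_le_mul_of_nonneg_right (show n ≤ -1 by omega) (show (0:ℤ) ≤ τ by omega)]
      · rw [h, zero_mul] at h5; omega
      · nlinarith [mul_le_mul_of_nonneg_right (show (1:ℤ) ≤ n by omega) (show (0:ℤ) ≤ τ by omega)]
    rw [geom_sum_eq hz1, hzτ]
    simp

lemma sig_mulvec_vv {τ : ℕ} [NeZero τ] (c d : ℝ) (Sig : Matrix (Fin τ) (Fin τ) ℝ)
    (hSig : ∀ j k : Fin τ, Sig j k = (c + d) * (if j = k then 1 else 0)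
      - d / 2 * ((if (j:ℕ) = ((k:ℕ) + 1) % τ then 1 else 0)
          + (if (k:ℕ) = ((j:ℕ) + 1) % τ then 1 else 0)))
    (k j : Fin τ) :
    ∑ r, ((Sig j r : ℝ) : ℂ) * vv τ k r
      = ((c + d * (1 - Real.cos (2 * π * k / τ)) : ℝ) : ℂ) * vv τ k j := by
  classical
  have e1 : ∀ r : Fin τ, ((j:ℕ) = ((r:ℕ) + 1) % τ) ↔ (r = j - 1) := by
    intro r
    rw [fin_succ_iff]
    constructor
    · intro h; rw [h]; exact (add_sub_cancel_right r 1).symm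
    · intro h; rw [h]; exact (sub_add_cancel j 1).symm
  have e2 : ∀ r : Fin τ, ((r:ℕ) = ((j:ℕ) + 1) % τ) ↔ (r = j + 1) := by
    intro r; exact fin_succ_iff r j
  have hsplit : ∀ r : Fin τ, ((Sig j r : ℝ) : ℂ) * vv τ k r
      = (((c:ℂ) + d) * if j = r then vv τ k r else 0)
        - ((d:ℂ) / 2) * ((if r = j - 1 then vv τ k r else 0)
            + (if r = j + 1 then vv τ k r else 0)) := by
    intro r
    simp only [hSig j r, e1 r, e2 r]
    push_cast [apply_ite Complex.ofReal]
    split_ifs <;> ring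
  simp_rw [hsplit]
  rw [Finset.sum_sub_distrib, ← Finset.mul_sum, ← Finset.mul_sum, Finset.sum_add_distrib,
    Finset.sum_ite_eq Finset.univ j (vv τ k), Finset.sum_ite_eq' Finset.univ (j - 1) (vv τ k),
    Finset.sum_ite_eq' Finset.univ (j + 1) (vv τ k)]
  simp only [Finset.mem_univ, if_true]
  set E : ℂ := Complex.exp ((2 * π * k / τ : ℝ) * Complex.I) with hEdef
  have hE0 : E ≠ 0 := Complex.exp_ne_zero _
  have hjm : vv τ k j = E * vv τ k (j - 1) := by
    conv_lhs => rw [show j = (j - 1) + 1 by rw [sub_add_cancel]]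
    exact vv_shift k (j - 1)
  have hjp : vv τ k (j + 1) = E * vv τ k j := vv_shift k j
  have hEinv : vv τ k (j - 1) = E⁻¹ * vv τ k j := by
    rw [hjm]; field_simp
  have hcos : E + E⁻¹ = 2 * Complex.cos ((2 * π * k / τ : ℝ) : ℂ) := by
    rw [hEdef, ← Complex.exp_neg, ← neg_mul, Complex.exp_mul_I, Complex.exp_mul_I,
      Complex.cos_neg, Complex.sin_neg]
    ring
  rw [hEinv, hjp]
  push_cast [Complex.ofReal_cos] at hcos ⊢
  linear_combination (-(d:ℂ) / 2 * vv τ k j) * hcos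

lemma sum_inv_eigenvalues {τ : ℕ} (hτ : 1 ≤ τ) (c d : ℝ)
    (hμ0 : ∀ k : Fin τ, c + d * (1 - Real.cos (2 * π * k / τ)) ≠ 0)
    (Sig U : Matrix (Fin τ) (Fin τ) ℝ) (ev : Fin τ → ℝ)
    (hdec : Sig = U * Matrix.diagonal ev * Uᵀ) (hUU : Uᵀ * U = 1) (hev : ∀ j, ev j ≠ 0)
    (hSig : ∀ j k : Fin τ, Sig j k = (c + d) * (if j = k then 1 else 0)
      - d / 2 * ((if (j:ℕ) = ((k:ℕ) + 1) % τ then 1 else 0)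
          + (if (k:ℕ) = ((j:ℕ) + 1) % τ then 1 else 0))) :
    ∑ j, (ev j)⁻¹ = ∑ k : Fin τ, (c + d * (1 - Real.cos (2 * π * k / τ)))⁻¹ := by
  haveI : NeZero τ := ⟨by omega⟩
  classical
  set φ : ℝ →+* ℂ := Complex.ofRealHom with hφ
  set Sc : Matrix (Fin τ) (Fin τ) ℂ := Sig.map φ with hSc
  set Uc : Matrix (Fin τ) (Fin τ) ℂ := U.map φ with hUc
  set μ : Fin τ → ℝ := fun k => c + d * (1 - Real.cos (2 * π * k / τ)) with hμdef
  set B : Matrix (Fin τ) (Fin τ) ℂ :=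
    Matrix.of (fun p q => (τ:ℂ)⁻¹ * ∑ k, ((μ k : ℝ):ℂ)⁻¹ * (vv τ k p * (vv τ k q)⁻¹)) with hBdef
  set D' : Matrix (Fin τ) (Fin τ) ℂ := Matrix.diagonal (fun j => ((ev j : ℝ):ℂ)⁻¹) with hD'
  set D : Matrix (Fin τ) (Fin τ) ℂ := Matrix.diagonal (fun j => ((ev j : ℝ):ℂ)) with hD
  set P : Matrix (Fin τ) (Fin τ) ℂ := Uc * D' * Ucᵀ with hPdef
  have hτC : (τ:ℂ) ≠ 0 := Nat.cast_ne_zero.mpr (NeZero.ne τ)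
  have hUcUc : Ucᵀ * Uc = 1 := by
    have h := congrArg (fun M => Matrix.map M φ) hUU
    simp only [Matrix.map_mul] at h
    rw [Matrix.map_one φ (map_zero φ) (map_one φ), Matrix.transpose_map] at h
    exact h
  have hUcUc' : Uc * Ucᵀ = 1 := mul_eq_one_comm.mp hUcUc
  have hScdec : Sc = Uc * D * Ucᵀ := by
    rw [hSc, hdec]
    simp only [Matrix.map_mul]
    rw [Matrix.transpose_map, Matrix.diagonal_map (map_zero φ)]
    rfl
  have hDD : D * D' = 1 := by
    rw [hD, hD', Matrix.diagonal_mul_diagonal]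
    rw [show (fun j => ((ev j : ℝ):ℂ) * ((ev j : ℝ):ℂ)⁻¹) = fun _ => (1:ℂ) from
      funext fun j => mul_inv_cancel₀ (by exact_mod_cast hev j)]
    exact Matrix.diagonal_one
  have hSP : Sc * P = 1 := by
    rw [hScdec, hPdef]
    calc Uc * D * Ucᵀ * (Uc * D' * Ucᵀ) = Uc * D * (Ucᵀ * Uc) * (D' * Ucᵀ) := by
          simp only [Matrix.mul_assoc]
      _ = Uc * (D * D') * Ucᵀ := by rw [hUcUc, Matrix.mul_one]; simp only [Matrix.mul_assoc]
      _ = 1 := by rw [hDD, Matrix.mul_one, hUcUc']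
  have heig : ∀ k j : Fin τ, ∑ r, Sc j r * vv τ k r = ((μ k : ℝ):ℂ) * vv τ k j := by
    intro k j
    simp only [hSc, Matrix.map_apply]
    exact sig_mulvec_vv c d Sig hSig k j
  have hSB : Sc * B = 1 := by
    ext p q
    rw [Matrix.mul_apply, Matrix.one_apply]
    have hrow : ∀ r, Sc p r * B r q
        = ∑ k, (τ:ℂ)⁻¹ * ((μ k : ℝ):ℂ)⁻¹ * (Sc p r * vv τ k r) * (vv τ k q)⁻¹ := by
      intro r
      rw [hBdef]
      simp only [Matrix.of_apply, Finset.mul_sum]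
      exact Finset.sum_congr rfl fun k _ => by ring
    simp_rw [hrow]
    rw [Finset.sum_comm]
    have hinner : ∀ k : Fin τ,
        (∑ r, (τ:ℂ)⁻¹ * ((μ k : ℝ):ℂ)⁻¹ * (Sc p r * vv τ k r) * (vv τ k q)⁻¹)
          = (τ:ℂ)⁻¹ * (vv τ k p * (vv τ k q)⁻¹) := by
      intro k
      have h1 : (τ:ℂ)⁻¹ * ((μ k : ℝ):ℂ)⁻¹ * (∑ r, Sc p r * vv τ k r) * (vv τ k q)⁻¹
          = (∑ r, (τ:ℂ)⁻¹ * ((μ k : ℝ):ℂ)⁻¹ * (Sc p r * vv τ k r) * (vv τ k q)⁻¹) := by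
        rw [Finset.mul_sum, Finset.sum_mul]
      rw [← h1, heig k p]
      have hne : ((μ k : ℝ):ℂ) ≠ 0 := by exact_mod_cast hμ0 k
      have hcancel : ((μ k : ℝ):ℂ)⁻¹ * ((μ k : ℝ):ℂ) = 1 := inv_mul_cancel₀ hne
      linear_combination ((τ:ℂ)⁻¹ * vv τ k p * (vv τ k q)⁻¹) * hcancel
    simp_rw [hinner]
    rw [← Finset.mul_sum, vv_orth p q]
    split_ifs with h
    · field_simp
    · simp
  have hBP : B = P := by
    have hBS : B * Sc = 1 := mul_eq_one_comm.mp hSB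
    calc B = B * (Sc * P) := by rw [hSP, Matrix.mul_one]
      _ = (B * Sc) * P := by rw [Matrix.mul_assoc]
      _ = P := by rw [hBS, Matrix.one_mul]
  have htrP : P.trace = ∑ j, ((ev j : ℝ):ℂ)⁻¹ := by
    rw [hPdef, Matrix.trace_mul_cycle, hUcUc, Matrix.one_mul, hD', Matrix.trace_diagonal]
  have htrB : B.trace = ∑ k, ((μ k : ℝ):ℂ)⁻¹ := by
    have hdiag : ∀ p : Fin τ, B p p = (τ:ℂ)⁻¹ * ∑ k, ((μ k : ℝ):ℂ)⁻¹ := by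
      intro p
      rw [hBdef]
      simp only [Matrix.of_apply]
      congr 1
      exact Finset.sum_congr rfl fun k _ => by
        rw [mul_inv_cancel₀ (vv_ne_zero k p), mul_one]
    rw [Matrix.trace]
    simp only [Matrix.diag_apply, hdiag]
    rw [Finset.sum_const, Finset.card_univ, Fintype.card_fin, nsmul_eq_mul]
    field_simp
  have hfin : ∑ j, ((ev j : ℝ):ℂ)⁻¹ = ∑ k, ((μ k : ℝ):ℂ)⁻¹ := by
    rw [← htrP, ← htrB, hBP]
  have : ((∑ j, (ev j)⁻¹ : ℝ) : ℂ) = ((∑ k, (μ k)⁻¹ : ℝ) : ℂ) := by push_cast; exact hfin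
  exact_mod_cast this

lemma quad_form {τ : ℕ} [NeZero τ] (c d : ℝ) (Sig : Matrix (Fin τ) (Fin τ) ℝ)
    (hSig : ∀ j k : Fin τ, Sig j k = (c + d) * (if j = k then 1 else 0)
      - d / 2 * ((if (j:ℕ) = ((k:ℕ) + 1) % τ then 1 else 0)
          + (if (k:ℕ) = ((j:ℕ) + 1) % τ then 1 else 0)))
    (x : Fin τ → ℝ) :
    dotProduct x (Sig.mulVec x)
      = c * ∑ j, x j ^ 2 + d / 2 * ∑ j, (x (j + 1) - x j) ^ 2 := by
  classical
  have hrow : ∀ j : Fin τ, Sig.mulVec x j = (c + d) * x j - d / 2 * (x (j - 1) + x (j + 1)) := by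
    intro j
    have e1 : ∀ r : Fin τ, ((j:ℕ) = ((r:ℕ) + 1) % τ) ↔ (r = j - 1) := by
      intro r
      rw [fin_succ_iff]
      constructor
      · intro h; rw [h]; exact (add_sub_cancel_right r 1).symm
      · intro h; rw [h]; exact (sub_add_cancel j 1).symm
    have e2 : ∀ r : Fin τ, ((r:ℕ) = ((j:ℕ) + 1) % τ) ↔ (r = j + 1) := fun r => fin_succ_iff r j
    have hsplit : ∀ r : Fin τ, Sig j r * x r
        = ((c + d) * if j = r then x r else 0)
          - (d / 2) * ((if r = j - 1 then x r else 0) + (if r = j + 1 then x r else 0)) := by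
      intro r
      simp only [hSig j r, e1 r, e2 r]
      split_ifs <;> ring
    show ∑ r, Sig j r * x r = _
    simp_rw [hsplit]
    rw [Finset.sum_sub_distrib, ← Finset.mul_sum, ← Finset.mul_sum, Finset.sum_add_distrib,
      Finset.sum_ite_eq Finset.univ j x, Finset.sum_ite_eq' Finset.univ (j - 1) x,
      Finset.sum_ite_eq' Finset.univ (j + 1) x]
    simp only [Finset.mem_univ, if_true]
  have h1 : ∑ j : Fin τ, x (j + 1) ^ 2 = ∑ j, x j ^ 2 :=
    Fintype.sum_equiv (Equiv.addRight (1 : Fin τ)) _ _ (fun j => rfl)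
  have h2 : ∑ j : Fin τ, x j * x (j - 1) = ∑ j : Fin τ, x (j + 1) * x j := by
    refine (Fintype.sum_equiv (Equiv.addRight (1 : Fin τ)) _ _ (fun j => ?_)).symm
    simp [Equiv.coe_addRight, add_sub_cancel_right]
  have h3 : ∑ j : Fin τ, x j * x (j + 1) = ∑ j : Fin τ, x (j + 1) * x j := by
    exact Finset.sum_congr rfl fun j _ => mul_comm _ _
  have hexp : ∑ j : Fin τ, (x (j + 1) - x j) ^ 2
      = ∑ j, x j ^ 2 - 2 * ∑ j : Fin τ, x (j + 1) * x j + ∑ j, x j ^ 2 := by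
    have : ∀ j : Fin τ, (x (j + 1) - x j) ^ 2
        = x (j + 1) ^ 2 - 2 * (x (j + 1) * x j) + x j ^ 2 := fun j => by ring
    simp_rw [this]
    rw [Finset.sum_add_distrib, Finset.sum_sub_distrib, ← Finset.mul_sum, h1]
  have hlhs : dotProduct x (Sig.mulVec x)
      = (c + d) * ∑ j, x j ^ 2
        - d / 2 * (∑ j : Fin τ, x j * x (j - 1) + ∑ j : Fin τ, x j * x (j + 1)) := by
    unfold dotProduct
    simp_rw [hrow]
    have : ∀ j : Fin τ, x j * ((c + d) * x j - d / 2 * (x (j - 1) + x (j + 1)))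
        = (c + d) * x j ^ 2 - d / 2 * (x j * x (j - 1) + x j * x (j + 1)) := fun j => by ring
    simp_rw [this]
    rw [Finset.sum_sub_distrib, ← Finset.mul_sum, ← Finset.mul_sum, Finset.sum_add_distrib]
  rw [hlhs, hexp, h2, h3]
  ring

lemma sig_posdef {τ : ℕ} [NeZero τ] (c d : ℝ) (hc : 0 < c) (hd : 0 < d)
    (Sig : Matrix (Fin τ) (Fin τ) ℝ)
    (hSig : ∀ j k : Fin τ, Sig j k = (c + d) * (if j = k then 1 else 0)
      - d / 2 * ((if (j:ℕ) = ((k:ℕ) + 1) % τ then 1 else 0)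
          + (if (k:ℕ) = ((j:ℕ) + 1) % τ then 1 else 0))) :
    Sig.PosDef := by
  refine Matrix.PosDef.of_dotProduct_mulVec_pos ?_ ?_
  · show Sigᴴ = Sig
    ext j k
    simp only [Matrix.conjTranspose_apply, star_trivial]
    rw [hSig k j, hSig j k]
    have : (k = j) ↔ (j = k) := eq_comm
    rw [if_congr this rfl rfl]
    ring
  · intro x hx
    have hsx : star x = x := star_trivial x
    rw [hsx, quad_form c d Sig hSig x]
    obtain ⟨i, hi⟩ : ∃ i, x i ≠ 0 := Function.ne_iff.mp hx
    have hS : 0 < ∑ j, x j ^ 2 :=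
      Finset.sum_pos' (fun j _ => sq_nonneg _) ⟨i, Finset.mem_univ i, pow_two_pos_of_ne_zero hi⟩
    have hT : 0 ≤ ∑ j : Fin τ, (x (j + 1) - x j) ^ 2 := Finset.sum_nonneg fun j _ => sq_nonneg _
    nlinarith

lemma gauss_sq {b : ℝ} (hb : 0 < b) :
    ∫ x : ℝ, x ^ 2 * Real.exp (-(b * x ^ 2)) = 1 / (2 * b) * Real.sqrt (π / b) := by
  simpa [neg_mul] using gauss_sq_aux hb

lemma integrable_sq_gauss {b : ℝ} (hb : 0 < b) :
    Integrable fun x : ℝ => x ^ 2 * Real.exp (-(b * x ^ 2)) := by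
  have := integrable_rpow_mul_exp_neg_mul_sq hb (s := 2) (by norm_num)
  simp_rw [neg_mul] at this ⊢
  convert this using 2 with x
  rw [← Real.rpow_natCast x 2]; norm_num

lemma gauss_den {n : ℕ} (μ : Fin n → ℝ) (hμ : ∀ j, 0 < μ j) :
    ∫ y : Fin n → ℝ, Real.exp (-(∑ j, μ j * y j ^ 2)) = ∏ j, Real.sqrt (π / μ j) := by
  have h : ∀ y : Fin n → ℝ, Real.exp (-(∑ j, μ j * y j ^ 2))
      = ∏ j, Real.exp (-(μ j * y j ^ 2)) := by
    intro y; rw [← Real.exp_sum, ← Finset.sum_neg_distrib]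
  simp_rw [h]
  rw [integral_fintype_prod_volume_eq_prod (f := fun j x => Real.exp (-(μ j * x ^ 2)))]
  refine Finset.prod_congr rfl fun j _ => ?_
  simpa [neg_mul] using integral_gaussian (μ j)

lemma gauss_num {n : ℕ} (μ : Fin n → ℝ) (hμ : ∀ j, 0 < μ j) :
    ∫ y : Fin n → ℝ, Real.exp (-(∑ j, μ j * y j ^ 2)) * ∑ j, y j ^ 2
      = (∑ j, 1 / (2 * μ j)) * ∏ j, Real.sqrt (π / μ j) := by
  classical
  set F : Fin n → Fin n → ℝ → ℝ :=
    fun j k x => (if k = j then x ^ 2 else 1) * Real.exp (-(μ k * x ^ 2)) with hF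
  have hint : ∀ j k, Integrable (F j k) := by
    intro j k
    by_cases h : k = j
    · simpa [hF, h] using integrable_sq_gauss (hμ k)
    · simpa [hF, h, neg_mul] using integrable_exp_neg_mul_sq (hμ k)
  have key : ∀ y : Fin n → ℝ, Real.exp (-(∑ j, μ j * y j ^ 2)) * ∑ j, y j ^ 2
      = ∑ j, ∏ k, F j k (y k) := by
    intro y
    rw [Finset.mul_sum]
    refine Finset.sum_congr rfl fun j _ => ?_
    rw [hF]
    simp only
    rw [Finset.prod_mul_distrib, Finset.prod_ite_eq' Finset.univ j (fun k => y k ^ 2)]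
    simp only [Finset.mem_univ, if_true]
    rw [← Real.exp_sum, ← Finset.sum_neg_distrib]
    ring
  simp_rw [key]
  rw [integral_finset_sum (μ := volume) _ (fun j _ => Integrable.fintype_prod (fun k => hint j k))]
  rw [Finset.sum_mul]
  refine Finset.sum_congr rfl fun j _ => ?_
  rw [integral_fintype_prod_volume_eq_prod (f := F j)]
  have : ∀ k, ∫ x : ℝ, F j k x
      = (if k = j then 1 / (2 * μ j) else 1) * Real.sqrt (π / μ k) := by
    intro k
    by_cases h : k = j
    · simp only [hF, h, if_true]
      exact gauss_sq (hμ j)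
    · simp only [hF, h, if_false]
      simpa [neg_mul] using integral_gaussian (μ k)
  simp_rw [this]
  rw [Finset.prod_mul_distrib, Finset.prod_ite_eq' Finset.univ j (fun _ => 1 / (2 * μ j))]
  simp

lemma integral_comp_orth {n : ℕ} (U : Matrix (Fin n) (Fin n) ℝ) (hU : U * Uᵀ = 1)
    (g : (Fin n → ℝ) → ℝ) : ∫ x, g (U.mulVec x) = ∫ x, g x := by
  have hdet : U.det * U.det = 1 := by
    have := congrArg Matrix.det hU
    rwa [Matrix.det_mul, Matrix.det_transpose, Matrix.det_one] at this
  have hdet1 : |U.det| = 1 := by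
    rcases mul_self_eq_one_iff.mp hdet with h | h <;> simp [h]
  have hdetne : U.det ≠ 0 := by
    intro h; rw [h] at hdet1; simp at hdet1
  have hU' : Uᵀ * U = 1 := mul_eq_one_comm.mp hU
  let e : (Fin n → ℝ) ≃ₗ[ℝ] (Fin n → ℝ) :=
    LinearEquiv.ofLinear (Matrix.toLin' U) (Matrix.toLin' Uᵀ)
      (by rw [← Matrix.toLin'_mul, hU, Matrix.toLin'_one])
      (by rw [← Matrix.toLin'_mul, hU', Matrix.toLin'_one])
  let ec := e.toContinuousLinearEquiv
  let em := ec.toHomeomorph.toMeasurableEquiv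
  have hmp : MeasurePreserving em volume volume := by
    constructor
    · exact em.measurable
    · have : (em : (Fin n → ℝ) → (Fin n → ℝ)) = Matrix.toLin' U := rfl
      rw [this, Real.map_matrix_volume_pi_eq_smul_volume_pi hdetne]
      rw [abs_inv, hdet1]
      simp
  have := hmp.integral_comp' (g := g)
  rw [← this]
  rfl

/-- For the Euclidean lattice harmonic oscillator with circulant matrix `Σ`,
the expectation `⟨Φ²⟩_E` equals `(1/(2τ)) Σ_k λ_k²` where
`λ_k² = (amω²/(2hb) + (m/(ahb))(1 − cos(2πk/τ)))⁻¹`. -/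
theorem euclidean_lattice_harmonic_oscillator_phi_sq (τ : ℕ) (hτ : 1 ≤ τ)
    (m a ω hb : ℝ) (hm : 0 < m) (ha : 0 < a) (hω : 0 < ω) (hhb : 0 < hb)
    (Sig : Matrix (Fin τ) (Fin τ) ℝ)
    (hSig : ∀ j k : Fin τ, Sig j k = (1 / hb) *
      ((if j = k then m / a + a * m * ω ^ 2 / 2 else 0)
        - (m / (2 * a)) * ((if (j : ℕ) = ((k : ℕ) + 1) % τ then 1 else 0)
            + (if (k : ℕ) = ((j : ℕ) + 1) % τ then 1 else 0)))) :
    (∫ Φ : Fin τ → ℝ,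
        Real.exp (-(dotProduct Φ (Sig.mulVec Φ))) * ((1 / τ) * ∑ k, Φ k ^ 2)) /
      (∫ Φ : Fin τ → ℝ, Real.exp (-(dotProduct Φ (Sig.mulVec Φ)))) =
    (1 / (2 * τ)) * ∑ k : Fin τ,
      (a * m * ω ^ 2 / (2 * hb) + (m / (a * hb)) * (1 - Real.cos (2 * Real.pi * k / τ)))⁻¹ := by
  haveI : NeZero τ := ⟨by omega⟩
  classical
  set c : ℝ := a * m * ω ^ 2 / (2 * hb) with hcdef
  set d : ℝ := m / (a * hb) with hddef
  have hc : 0 < c := by rw [hcdef]; positivity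
  have hd : 0 < d := by rw [hddef]; positivity
  have hSig' : ∀ j k : Fin τ, Sig j k = (c + d) * (if j = k then 1 else 0)
      - d / 2 * ((if (j:ℕ) = ((k:ℕ) + 1) % τ then 1 else 0)
          + (if (k:ℕ) = ((j:ℕ) + 1) % τ then 1 else 0)) := by
    intro j k
    rw [hSig j k, hcdef, hddef]
    split_ifs <;> field_simp <;> try ring
    all_goals tauto
  have hPD := sig_posdef c d hc hd Sig hSig'
  have hHerm : Sig.IsHermitian := hPD.1
  set U : Matrix (Fin τ) (Fin τ) ℝ :=
    (Matrix.IsHermitian.eigenvectorUnitary hHerm : Matrix (Fin τ) (Fin τ) ℝ) with hUdef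
  set ev : Fin τ → ℝ := hHerm.eigenvalues with hevdef
  have hev_pos : ∀ j, 0 < ev j := fun j => hPD.eigenvalues_pos j
  have hev_ne : ∀ j, ev j ≠ 0 := fun j => (hev_pos j).ne'
  have hstarU : star U = Uᵀ := by
    ext i j
    simp [Matrix.star_apply]
  have hUU : Uᵀ * U = 1 := by
    rw [← hstarU]
    exact (Matrix.IsHermitian.eigenvectorUnitary hHerm).2.1
  have hUU' : U * Uᵀ = 1 := mul_eq_one_comm.mp hUU
  have hspec : Sig = U * Matrix.diagonal ev * Uᵀ := by
    have h := hHerm.spectral_theorem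
    rw [Unitary.conjStarAlgAut_apply, hstarU] at h
    rw [RCLike.ofReal_real_eq_id] at h
    simpa using h
  have hQ : ∀ y : Fin τ → ℝ,
      dotProduct (U.mulVec y) (Sig.mulVec (U.mulVec y)) = ∑ j, ev j * y j ^ 2 := by
    intro y
    conv_lhs => rw [hspec]
    rw [Matrix.mulVec_mulVec, Matrix.mul_assoc (U * Matrix.diagonal ev) Uᵀ U, hUU,
      Matrix.mul_one, Matrix.dotProduct_mulVec, ← Matrix.vecMul_transpose,
      Matrix.vecMul_vecMul, ← Matrix.mul_assoc, hUU, Matrix.one_mul]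
    unfold dotProduct
    refine Finset.sum_congr rfl fun j _ => ?_
    rw [Matrix.vecMul_diagonal]
    ring
  have hN : ∀ y : Fin τ → ℝ, ∑ k, (U.mulVec y) k ^ 2 = ∑ k, y k ^ 2 := by
    intro y
    have h1 : ∑ k, (U.mulVec y) k ^ 2 = dotProduct (U.mulVec y) (U.mulVec y) := by
      unfold dotProduct
      exact Finset.sum_congr rfl fun k _ => (sq (U.mulVec y k)) ▸ rfl
    rw [h1, Matrix.dotProduct_mulVec, ← Matrix.vecMul_transpose, Matrix.vecMul_vecMul, hUU,
      Matrix.vecMul_one]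
    unfold dotProduct
    exact Finset.sum_congr rfl fun k _ => (sq (y k)).symm
  -- numerator
  have hnum : (∫ Φ : Fin τ → ℝ,
        Real.exp (-(dotProduct Φ (Sig.mulVec Φ))) * ((1 / (τ:ℝ)) * ∑ k, Φ k ^ 2))
      = (1 / (τ:ℝ)) * ((∑ j, 1 / (2 * ev j)) * ∏ j, Real.sqrt (π / ev j)) := by
    have hre : ∀ Φ : Fin τ → ℝ,
        Real.exp (-(dotProduct Φ (Sig.mulVec Φ))) * ((1 / (τ:ℝ)) * ∑ k, Φ k ^ 2)
          = (1 / (τ:ℝ)) * (Real.exp (-(dotProduct Φ (Sig.mulVec Φ))) * ∑ k, Φ k ^ 2) :=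
      fun Φ => by ring
    simp_rw [hre]
    rw [integral_const_mul]
    congr 1
    rw [← integral_comp_orth U hUU'
      (fun Φ => Real.exp (-(dotProduct Φ (Sig.mulVec Φ))) * ∑ k, Φ k ^ 2)]
    have : ∀ y : Fin τ → ℝ,
        Real.exp (-(dotProduct (U.mulVec y) (Sig.mulVec (U.mulVec y))))
            * ∑ k, (U.mulVec y) k ^ 2
          = Real.exp (-(∑ j, ev j * y j ^ 2)) * ∑ j, y j ^ 2 := by
      intro y
      rw [hQ y, hN y]
    simp_rw [this]
    exact gauss_num ev hev_pos
  have hden : (∫ Φ : Fin τ → ℝ, Real.exp (-(dotProduct Φ (Sig.mulVec Φ))))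
      = ∏ j, Real.sqrt (π / ev j) := by
    rw [← integral_comp_orth U hUU'
      (fun Φ => Real.exp (-(dotProduct Φ (Sig.mulVec Φ))))]
    have : ∀ y : Fin τ → ℝ,
        Real.exp (-(dotProduct (U.mulVec y) (Sig.mulVec (U.mulVec y))))
          = Real.exp (-(∑ j, ev j * y j ^ 2)) := fun y => by rw [hQ y]
    simp_rw [this]
    exact gauss_den ev hev_pos
  have hPpos : 0 < ∏ j, Real.sqrt (π / ev j) :=
    Finset.prod_pos fun j _ => Real.sqrt_pos.mpr (div_pos Real.pi_pos (hev_pos j))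
  rw [hnum, hden, mul_div_assoc, mul_div_assoc, div_self hPpos.ne', mul_one]
  have hμ0 : ∀ k : Fin τ, c + d * (1 - Real.cos (2 * π * k / τ)) ≠ 0 := by
    intro k
    have h1 : Real.cos (2 * π * k / τ) ≤ 1 := Real.cos_le_one _
    nlinarith
  have hsum := sum_inv_eigenvalues hτ c d hμ0 Sig U ev hspec hUU hev_ne hSig'
  have h2 : ∑ j, 1 / (2 * ev j) = (1/2) * ∑ j, (ev j)⁻¹ := by
    rw [Finset.mul_sum]
    exact Finset.sum_congr rfl fun j _ => by rw [one_div, mul_inv]; ring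
  rw [h2, hsum]
  ring
end

section
/- Let (f_n) be a sequence of holomorphic functions on an open connected set D ⊆ ℂ that is locally uniformly bounded, and suppose f_n converges pointwise on a subset of D that has a limit point in D (e.g., an open half-plane contained in D). Then (f_n) converges locally uniformly on all of D to a holomorphic function. -/
open Filter

section VitaliAux

open Metric Set

noncomputable def vitaliDslope (t : ℕ → ℂ) (g : ℂ → ℂ) : ℕ → ℂ → ℂ
  | 0 => g
  | (k + 1) => dslope (vitaliDslope t g k) (t k)

lemma vitaliDslope_succ (t : ℕ → ℂ) (g : ℂ → ℂ) (k : ℕ) :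
    vitaliDslope t g (k + 1) = dslope (vitaliDslope t g k) (t k) := rfl

lemma vitaliDslope_eq (t : ℕ → ℂ) (g : ℂ → ℂ) (k : ℕ) (z : ℂ) :
    vitaliDslope t g k z
      = vitaliDslope t g k (t k) + (z - t k) * vitaliDslope t g (k + 1) z := by
  have h := sub_smul_dslope (vitaliDslope t g k) (t k) z
  rw [smul_eq_mul] at h
  rw [vitaliDslope_succ]
  linear_combination -h

lemma vitaliDslope_expansion (t : ℕ → ℂ) (g : ℂ → ℂ) (k : ℕ) (z : ℂ) :
    g z = (∑ j ∈ Finset.range k,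
        vitaliDslope t g j (t j) * ∏ i ∈ Finset.range j, (z - t i))
      + vitaliDslope t g k z * ∏ i ∈ Finset.range k, (z - t i) := by
  induction k with
  | zero => simp [vitaliDslope]
  | succ k ih =>
    rw [Finset.sum_range_succ, Finset.prod_range_succ, ih, vitaliDslope_eq t g k z]
    ring

lemma vitali_exists_accum_seq (c : ℂ) (S : Set ℂ) (hacc : AccPt c (Filter.principal S))
    {δ : ℝ} (hδ : 0 < δ) :
    ∃ t : ℕ → ℂ, (∀ i, t i ∈ S) ∧ (∀ i, dist (t i) c < δ) ∧ ∀ i j, i < j → t j ≠ t i := by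
  have H : ∀ ε : ℝ, 0 < ε → ∃ x : ℂ, x ∈ S ∧ x ≠ c ∧ dist x c < ε := by
    intro ε hε
    obtain ⟨y, hy, hyne⟩ := accPt_iff_nhds.mp hacc (ball c ε) (ball_mem_nhds c hε)
    exact ⟨y, hy.2, hyne, hy.1⟩
  choose g hg1 hg2 hg3 using H
  set P : Type := {x : ℂ // x ∈ S ∧ x ≠ c ∧ dist x c < δ} with hP
  have hF : ∀ p : P, ∃ q : P, dist (q.1) c < dist (p.1) c := by
    intro p
    refine ⟨⟨g (dist p.1 c) (dist_pos.2 p.2.2.1), hg1 _ _, hg2 _ _,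
      lt_trans (hg3 _ _) p.2.2.2⟩, hg3 _ _⟩
  choose F hFlt using hF
  have ht0 : P := ⟨g δ hδ, hg1 _ _, hg2 _ _, hg3 _ _⟩
  set u : ℕ → P := fun n => F^[n] ht0 with hu
  have hdec : ∀ n, dist ((u (n + 1)).1) c < dist ((u n).1) c := by
    intro n
    have : u (n + 1) = F (u n) := Function.iterate_succ_apply' F n ht0
    rw [this]
    exact hFlt (u n)
  have hanti : StrictAnti (fun n => dist ((u n).1) c) := strictAnti_nat_of_succ_lt hdec
  refine ⟨fun n => (u n).1, fun i => (u i).2.1, fun i => (u i).2.2.2, ?_⟩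
  intro i j hij h
  exact absurd (congrArg (fun z => dist z c) h) (ne_of_lt (hanti hij))

/-- Key step of Vitali: given a uniform bound on a ball around `c` and pointwise
convergence on a set accumulating at `c`, the sequence is uniformly Cauchy near `c`. -/
lemma vitali_key (c : ℂ) (r M : ℝ) (hr : 0 < r) (f : ℕ → ℂ → ℂ)
    (hf : ∀ n, DifferentiableOn ℂ (f n) (ball c r))
    (hM : ∀ n, ∀ w ∈ ball c r, ‖f n w‖ ≤ M)
    (S : Set ℂ) (hS : ∀ z ∈ S, ∃ l, Tendsto (fun n => f n z) atTop (nhds l))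
    (hacc : AccPt c (Filter.principal S)) :
    UniformCauchySeqOn f atTop (closedBall c (r / 16)) := by
  obtain ⟨t, htS, htd, htne⟩ := vitali_exists_accum_seq c S hacc (show (0:ℝ) < r / 16 by positivity)
  -- differentiability of iterated dslopes
  have hdiff : ∀ n k, DifferentiableOn ℂ (vitaliDslope t (f n) k) (ball c r) := by
    intro n k
    induction k with
    | zero => exact hf n
    | succ k ih =>
      rw [vitaliDslope_succ]
      refine (Complex.differentiableOn_dslope ?_).mpr ih
      exact isOpen_ball.mem_nhds (mem_ball.mpr ((htd k).trans (by linarith)))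
  have hM0 : 0 ≤ M := le_trans (norm_nonneg _) (hM 0 c (mem_ball_self hr))
  -- norm bounds
  have hbound : ∀ n k, ∀ z ∈ closedBall c (r / 2),
      ‖vitaliDslope t (f n) k z‖ ≤ M * (32 / (7 * r)) ^ k := by
    intro n k
    induction k with
    | zero =>
      intro z hz
      rw [pow_zero, mul_one]
      exact hM n z (closedBall_subset_ball (by linarith) hz)
    | succ k ih =>
      intro z hz
      have hr2 : (r / 2 : ℝ) ≠ 0 := by positivity
      have hcl : closure (ball c (r / 2)) = closedBall c (r / 2) := closure_ball c hr2
      refine Complex.norm_le_of_forall_mem_frontier_norm_le (U := ball c (r / 2)) isBounded_ball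
        ⟨(hdiff n (k + 1)).mono (ball_subset_ball (by linarith)),
          (hdiff n (k + 1)).continuousOn.mono
            (by rw [hcl]; exact closedBall_subset_ball (by linarith))⟩
        ?_ (by rw [hcl]; exact hz)
      intro w hw
      rw [frontier_ball c hr2] at hw
      have hwc : dist w c = r / 2 := mem_sphere.mp hw
      have hwt : w ≠ t k := by
        intro h
        rw [h] at hwc
        linarith [htd k]
      have hden : (7 : ℝ) * r / 16 ≤ ‖w - t k‖ := by
        have h1 : dist w c - dist (t k) c ≤ dist w (t k) := by
          have := dist_triangle w (t k) c
          linarith [this]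
        rw [← dist_eq_norm]
        linarith [htd k]
      rw [vitaliDslope_succ, dslope_of_ne _ hwt, slope_def_field]
      have hnum : ‖vitaliDslope t (f n) k w - vitaliDslope t (f n) k (t k)‖
          ≤ 2 * (M * (32 / (7 * r)) ^ k) := by
        have h1 := ih w (by rw [mem_closedBall]; linarith)
        have h2 := ih (t k) (mem_closedBall.mpr (le_of_lt ((htd k).trans (by linarith))))
        calc ‖vitaliDslope t (f n) k w - vitaliDslope t (f n) k (t k)‖
            ≤ ‖vitaliDslope t (f n) k w‖ + ‖vitaliDslope t (f n) k (t k)‖ := norm_sub_le _ _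
          _ ≤ 2 * (M * (32 / (7 * r)) ^ k) := by linarith
      rw [norm_div]
      calc ‖vitaliDslope t (f n) k w - vitaliDslope t (f n) k (t k)‖ / ‖w - t k‖
          ≤ (2 * (M * (32 / (7 * r)) ^ k)) / (7 * r / 16) := by
            apply div_le_div₀ (mul_nonneg (by norm_num)
              (mul_nonneg hM0 (pow_nonneg (by positivity) k))) hnum (by positivity) hden
        _ = M * (32 / (7 * r)) ^ (k + 1) := by
            rw [pow_succ]; field_simp; ring
  -- convergence of iterated difference quotients at the nodes
  have hconv' : ∀ k, ∀ i, k ≤ i →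
      ∃ l, Tendsto (fun n => vitaliDslope t (f n) k (t i)) atTop (nhds l) := by
    intro k
    induction k with
    | zero => exact fun i _ => hS (t i) (htS i)
    | succ k ih =>
      intro i hik
      obtain ⟨l1, hl1⟩ := ih i (Nat.le_of_succ_le hik)
      obtain ⟨l2, hl2⟩ := ih k le_rfl
      have hne : t i ≠ t k := htne k i hik
      refine ⟨(l1 - l2) / (t i - t k), ?_⟩
      have : ∀ n, vitaliDslope t (f n) (k + 1) (t i)
          = (vitaliDslope t (f n) k (t i) - vitaliDslope t (f n) k (t k)) / (t i - t k) := by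
        intro n
        rw [vitaliDslope_succ, dslope_of_ne _ hne, slope_def_field]
      simp only [this]
      exact (hl1.sub hl2).div_const _
  -- assembly
  rw [Metric.uniformCauchySeqOn_iff]
  intro ε hε
  -- choose k with 2 M (4/7)^k < ε/2
  have h47 : Tendsto (fun k : ℕ => 2 * M * ((4:ℝ) / 7) ^ k) atTop (nhds 0) := by
    have := (tendsto_pow_atTop_nhds_zero_of_lt_one (by norm_num : (0:ℝ) ≤ 4/7)
      (by norm_num : (4:ℝ)/7 < 1)).const_mul (2 * M)
    simpa using this
  obtain ⟨k, hk⟩ : ∃ k : ℕ, 2 * M * ((4:ℝ) / 7) ^ k < ε / 2 := by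
    have := h47.eventually (gt_mem_nhds (show (0:ℝ) < ε / 2 by positivity))
    exact this.exists
  -- Cauchy thresholds for the nodes
  have hCau : ∀ j, ∃ N : ℕ, ∀ m ≥ N, ∀ n ≥ N,
      dist (vitaliDslope t (f m) j (t j)) (vitaliDslope t (f n) j (t j))
        < ε / (2 * ((k:ℝ) + 1)) / ((r / 8) ^ j + 1) := by
    intro j
    obtain ⟨l, hl⟩ := hconv' j j le_rfl
    exact Metric.cauchySeq_iff.mp hl.cauchySeq _ (by positivity)
  choose N hN using hCau
  refine ⟨(Finset.range k).sup N, fun m hm n hn z hz => ?_⟩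
  have hzc : dist z c ≤ r / 16 := mem_closedBall.mp hz
  -- product bounds
  have hprod : ∀ j : ℕ, ‖∏ i ∈ Finset.range j, (z - t i)‖ ≤ (r / 8) ^ j := by
    intro j
    rw [norm_prod]
    calc ∏ i ∈ Finset.range j, ‖z - t i‖ ≤ ∏ i ∈ Finset.range j, (r / 8)
        := by
          apply Finset.prod_le_prod (fun i _ => norm_nonneg _)
          intro i _
          rw [← dist_eq_norm]
          calc dist z (t i) ≤ dist z c + dist c (t i) := dist_triangle _ _ _
            _ ≤ r / 8 := by
                rw [dist_comm c (t i)]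
                linarith [htd i]
      _ = (r / 8) ^ j := by rw [Finset.prod_const, Finset.card_range]
  -- the decomposition
  rw [dist_eq_norm]
  have hkey : f m z - f n z
      = (∑ j ∈ Finset.range k,
          (vitaliDslope t (f m) j (t j) - vitaliDslope t (f n) j (t j))
            * ∏ i ∈ Finset.range j, (z - t i))
        + (vitaliDslope t (f m) k z - vitaliDslope t (f n) k z)
            * ∏ i ∈ Finset.range k, (z - t i) := by
    rw [vitaliDslope_expansion t (f m) k z, vitaliDslope_expansion t (f n) k z]
    simp only [sub_mul, Finset.sum_sub_distrib]
    ring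
  rw [hkey]
  have hsum : ‖∑ j ∈ Finset.range k,
      (vitaliDslope t (f m) j (t j) - vitaliDslope t (f n) j (t j))
        * ∏ i ∈ Finset.range j, (z - t i)‖ ≤ ε / 2 := by
    calc ‖∑ j ∈ Finset.range k, _‖
        ≤ ∑ j ∈ Finset.range k,
          ‖(vitaliDslope t (f m) j (t j) - vitaliDslope t (f n) j (t j))
            * ∏ i ∈ Finset.range j, (z - t i)‖ := norm_sum_le _ _
      _ ≤ ∑ j ∈ Finset.range k, ε / (2 * ((k:ℝ) + 1)) := by
          apply Finset.sum_le_sum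
          intro j hj
          rw [norm_mul]
          have h1 : ‖vitaliDslope t (f m) j (t j) - vitaliDslope t (f n) j (t j)‖
              ≤ ε / (2 * ((k:ℝ) + 1)) / ((r / 8) ^ j + 1) := by
            rw [← dist_eq_norm]
            exact le_of_lt (hN j m (le_trans (Finset.le_sup hj) hm)
              n (le_trans (Finset.le_sup hj) hn))
          calc ‖vitaliDslope t (f m) j (t j) - vitaliDslope t (f n) j (t j)‖
                * ‖∏ i ∈ Finset.range j, (z - t i)‖
              ≤ (ε / (2 * ((k:ℝ) + 1)) / ((r / 8) ^ j + 1)) * ((r / 8) ^ j + 1) := by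
                apply mul_le_mul h1 ((hprod j).trans (by linarith)) (norm_nonneg _)
                  (by positivity)
            _ = ε / (2 * ((k:ℝ) + 1)) := div_mul_cancel₀ _ (by positivity)
      _ = (k:ℝ) * (ε / (2 * ((k:ℝ) + 1))) := by
          rw [Finset.sum_const, Finset.card_range, nsmul_eq_mul]
      _ ≤ ((k:ℝ) + 1) * (ε / (2 * ((k:ℝ) + 1))) := by
          apply mul_le_mul_of_nonneg_right (by linarith) (by positivity)
      _ = ε / 2 := by field_simp
  have hrem : ‖(vitaliDslope t (f m) k z - vitaliDslope t (f n) k z)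
      * ∏ i ∈ Finset.range k, (z - t i)‖ < ε / 2 := by
    rw [norm_mul]
    have hz2 : z ∈ closedBall c (r / 2) := mem_closedBall.mpr (by linarith)
    have h1 : ‖vitaliDslope t (f m) k z - vitaliDslope t (f n) k z‖
        ≤ 2 * (M * (32 / (7 * r)) ^ k) := by
      calc ‖vitaliDslope t (f m) k z - vitaliDslope t (f n) k z‖
          ≤ ‖vitaliDslope t (f m) k z‖ + ‖vitaliDslope t (f n) k z‖ := norm_sub_le _ _
        _ ≤ 2 * (M * (32 / (7 * r)) ^ k) := by
            linarith [hbound m k z hz2, hbound n k z hz2]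
    calc ‖vitaliDslope t (f m) k z - vitaliDslope t (f n) k z‖
          * ‖∏ i ∈ Finset.range k, (z - t i)‖
        ≤ (2 * (M * (32 / (7 * r)) ^ k)) * (r / 8) ^ k := by
          apply mul_le_mul h1 (hprod k) (norm_nonneg _) (by positivity)
      _ = 2 * M * ((4:ℝ) / 7) ^ k := by
          rw [mul_assoc, mul_assoc, ← mul_pow]
          have : (32 / (7 * r)) * (r / 8) = (4:ℝ) / 7 := by
            field_simp; ring
          rw [this]
          ring
      _ < ε / 2 := hk
  calc ‖_ + _‖ ≤ ‖∑ j ∈ Finset.range k,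
          (vitaliDslope t (f m) j (t j) - vitaliDslope t (f n) j (t j))
            * ∏ i ∈ Finset.range j, (z - t i)‖
        + ‖(vitaliDslope t (f m) k z - vitaliDslope t (f n) k z)
            * ∏ i ∈ Finset.range k, (z - t i)‖ := norm_add_le _ _
    _ < ε := by linarith

end VitaliAux

/-- Vitali's convergence theorem: a locally uniformly bounded sequence of holomorphic
functions on an open connected `D ⊆ ℂ` that converges pointwise on a subset of `D`
having a limit point in `D` converges locally uniformly on `D` to a holomorphic
function. -/
theorem vitali_convergence (D : Set ℂ) (hD : IsOpen D) (hDconn : IsConnected D)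
    (f : ℕ → ℂ → ℂ) (hf : ∀ n, DifferentiableOn ℂ (f n) D)
    (hbd : ∀ z ∈ D, ∃ r > (0 : ℝ), Metric.ball z r ⊆ D ∧
      ∃ M : ℝ, ∀ n, ∀ w ∈ Metric.ball z r, ‖f n w‖ ≤ M)
    (T : Set ℂ) (hTD : T ⊆ D)
    (hacc : ∃ z₀ ∈ D, AccPt z₀ (Filter.principal T))
    (hconv : ∀ z ∈ T, ∃ l : ℂ, Tendsto (fun n => f n z) atTop (nhds l)) :
    ∃ F : ℂ → ℂ, DifferentiableOn ℂ F D ∧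
      TendstoLocallyUniformlyOn f F atTop D := by
  have vitali_key := fun (c : ℂ) (r M : ℝ) hr hfb hMb S hSc hSa =>
    vitali_key c r M hr f hfb hMb S hSc hSa
  open Metric Set in
  classical
  set U : Set ℂ :=
    {c | ∃ ε > (0:ℝ), ball c ε ⊆ D ∧ UniformCauchySeqOn f atTop (ball c ε)} with hUdef
  -- pointwise convergence at points of U
  have hpt : ∀ z ∈ U, ∃ l, Tendsto (fun n => f n z) atTop (nhds l) := by
    intro z hz
    obtain ⟨ε, hε, _, hcau⟩ := hz
    apply cauchySeq_tendsto_of_complete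
    rw [Metric.cauchySeq_iff]
    intro δ hδ
    obtain ⟨N, hN⟩ := Metric.uniformCauchySeqOn_iff.mp hcau δ hδ
    exact ⟨N, fun m hm n hn => hN m hm n hn z (mem_ball_self hε)⟩
  -- key step to enter U
  have step : ∀ c ∈ D, ∀ S : Set ℂ,
      (∀ z ∈ S, ∃ l, Tendsto (fun n => f n z) atTop (nhds l)) →
      AccPt c (Filter.principal S) → c ∈ U := by
    intro c hc S hSconv hSacc
    obtain ⟨r, hr, hball, M, hM⟩ := hbd c hc
    have hcau := vitali_key c r M hr (fun n => (hf n).mono hball) hM S hSconv hSacc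
    exact ⟨r / 16, by positivity, (ball_subset_ball (by linarith)).trans hball,
      hcau.mono ball_subset_closedBall⟩
  -- U is open
  have hUopen : IsOpen U := by
    rw [Metric.isOpen_iff]
    rintro c ⟨ε, hε, hsub, hcau⟩
    refine ⟨ε / 2, by positivity, fun c' hc' => ?_⟩
    have hsub' : ball c' (ε / 2) ⊆ ball c ε := by
      apply ball_subset_ball'
      rw [mem_ball] at hc'
      linarith
    exact ⟨ε / 2, by positivity, hsub'.trans hsub, hcau.mono hsub'⟩
  -- z₀ ∈ U
  obtain ⟨z₀, hz₀D, hz₀acc⟩ := hacc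
  have hz₀U : z₀ ∈ U := step z₀ hz₀D T hconv hz₀acc
  -- D ∩ closure U ⊆ U
  have hclosed : ∀ c ∈ D, c ∈ closure U → c ∈ U := by
    intro c hcD hccl
    by_cases hcU : c ∈ U
    · exact hcU
    apply step c hcD U hpt
    rw [accPt_iff_nhds]
    intro V hV
    obtain ⟨y, hyV, hyU⟩ := mem_closure_iff_nhds.mp hccl V hV
    exact ⟨y, ⟨hyV, hyU⟩, fun h => hcU (h ▸ hyU)⟩
  -- D ⊆ U by connectedness
  have hDU : D ⊆ U := by
    apply hDconn.isPreconnected.subset_left_of_subset_union hUopen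
      (hD.sdiff isClosed_closure)
    · rw [Set.disjoint_left]
      intro x hxU hx2
      exact hx2.2 (subset_closure hxU)
    · intro x hx
      by_cases h : x ∈ closure U
      · exact Or.inl (hclosed x hx h)
      · exact Or.inr ⟨hx, h⟩
    · exact ⟨z₀, hz₀D, hz₀U⟩
  -- define the limit function
  set F : ℂ → ℂ := fun z =>
    if h : ∃ l, Tendsto (fun n => f n z) atTop (nhds l) then h.choose else 0 with hF
  have hFz : ∀ z ∈ D, Tendsto (fun n => f n z) atTop (nhds (F z)) := by
    intro z hz
    have h := hpt z (hDU hz)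
    simp only [hF, dif_pos h]
    exact h.choose_spec
  have hloc : TendstoLocallyUniformlyOn f F atTop D := by
    intro u hu x hx
    obtain ⟨ε, hε, hsub, hcau⟩ := hDU hx
    have htu : TendstoUniformlyOn f F atTop (ball x ε) :=
      hcau.tendstoUniformlyOn_of_tendsto fun y hy => hFz y (hsub hy)
    exact ⟨ball x ε, mem_nhdsWithin_of_mem_nhds (ball_mem_nhds x hε), htu u hu⟩
  exact ⟨F, hloc.differentiableOn (Eventually.of_forall hf) hD, hloc⟩
end

section
/- Let σ > 0, c ∈ ℝ with c ≠ 0, and δ > −1. Then for the regularized oscillatory integral, ∫_0^∞ e^{icr^σ} r^δ dr = (1/σ)·Γ((δ+1)/σ)/(−ic)^{(δ+1)/σ}, where the integral is defined as the limit ε → 0⁺ of ∫_0^∞ e^{(ic−ε)r^σ} r^δ dr and the power (−ic)^{(δ+1)/σ} uses the principal branch. -/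
open MeasureTheory Filter Complex

noncomputable def lapInt (a : ℝ) (b : ℂ) : ℂ :=
  ∫ t in Set.Ioi (0:ℝ), ((t ^ (a - 1) : ℝ) : ℂ) * Complex.exp (-(b * t))

lemma lap_meas (a : ℝ) (b : ℂ) :
    AEStronglyMeasurable (fun t : ℝ => ((t ^ (a - 1) : ℝ) : ℂ) * Complex.exp (-(b * t)))
      (volume.restrict (Set.Ioi 0)) := by
  refine (ContinuousOn.mul ?_ (Continuous.continuousOn (by continuity))).aestronglyMeasurable
    measurableSet_Ioi
  refine Complex.continuous_ofReal.comp_continuousOn ?_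
  intro t ht
  exact (Real.continuousAt_rpow_const t _ (Or.inl (ne_of_gt ht))).continuousWithinAt

lemma lap_norm {a : ℝ} {b : ℂ} {t : ℝ} (ht : 0 < t) :
    ‖((t ^ (a - 1) : ℝ) : ℂ) * Complex.exp (-(b * t))‖
      = t ^ (a - 1) * Real.exp (-(b.re * t)) := by
  rw [norm_mul, Complex.norm_real, Real.norm_eq_abs,
    _root_.abs_of_nonneg (Real.rpow_nonneg ht.le _), Complex.norm_exp]
  congr 2
  simp [Complex.mul_re]

lemma lap_integrableOn (a : ℝ) (ha : 0 < a) {b : ℂ} (hb : 0 < b.re) :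
    IntegrableOn (fun t : ℝ => ((t ^ (a - 1) : ℝ) : ℂ) * Complex.exp (-(b * t)))
      (Set.Ioi 0) := by
  have h0 : IntegrableOn (fun t : ℝ => t ^ (a - 1) * Real.exp (-b.re * t)) (Set.Ioi 0) := by
    have := integrableOn_rpow_mul_exp_neg_mul_rpow (s := a - 1) (p := 1) (b := b.re)
      (by linarith) one_pos hb
    simpa [Real.rpow_one] using this
  refine Integrable.mono' h0 (lap_meas a b) ?_
  filter_upwards [ae_restrict_mem measurableSet_Ioi] with t ht
  rw [lap_norm ht, neg_mul]

lemma lap_hasDerivAt (a : ℝ) (ha : 0 < a) {b : ℂ} (hb : 0 < b.re) :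
    HasDerivAt (lapInt a)
      (∫ t in Set.Ioi (0:ℝ), -(t:ℂ) * (((t ^ (a - 1) : ℝ) : ℂ) * Complex.exp (-(b * t)))) b := by
  set F : ℂ → ℝ → ℂ := fun z t => ((t ^ (a - 1) : ℝ) : ℂ) * Complex.exp (-(z * t)) with hF
  set F' : ℂ → ℝ → ℂ := fun z t => -(t:ℂ) * (((t ^ (a - 1) : ℝ) : ℂ) * Complex.exp (-(z * t)))
    with hF'
  have hε : (0:ℝ) < b.re / 2 := by linarith
  have key := hasDerivAt_integral_of_dominated_loc_of_deriv_le (F := F) (F' := F')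
    (μ := volume.restrict (Set.Ioi (0:ℝ))) (x₀ := b)
    (bound := fun t : ℝ => t ^ a * Real.exp (-(b.re / 2) * t)) (Metric.ball_mem_nhds b hε)
    (Eventually.of_forall fun z => lap_meas a z) (lap_integrableOn a ha hb)
    ?_ ?_ ?_ ?_
  · exact key.2
  · exact (Complex.continuous_ofReal.neg.aestronglyMeasurable).mul (lap_meas a b)
  · -- bound
    filter_upwards [ae_restrict_mem measurableSet_Ioi] with t ht
    intro z hz
    have hzre : b.re / 2 ≤ z.re := by
      have h1 := Complex.abs_re_le_norm (z - b)
      rw [Complex.sub_re] at h1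
      rw [Metric.mem_ball, Complex.dist_eq] at hz
      have := abs_le.mp (h1.trans hz.le)
      linarith [this.1]
    have hnorm : ‖F' z t‖ = t * (t ^ (a - 1) * Real.exp (-(z.re * t))) := by
      rw [hF', norm_mul, norm_neg, Complex.norm_real, Real.norm_eq_abs,
        _root_.abs_of_nonneg (le_of_lt ht), lap_norm ht]
    rw [hnorm]
    have ht' : (0:ℝ) < t := ht
    have hrw : t * t ^ (a - 1) = t ^ a := by
      rw [mul_comm]
      calc t ^ (a - 1) * t = t ^ (a - 1) * t ^ (1:ℝ) := by rw [Real.rpow_one]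
        _ = t ^ (a - 1 + 1) := (Real.rpow_add ht' _ _).symm
        _ = t ^ a := by ring_nf
    calc t * (t ^ (a - 1) * Real.exp (-(z.re * t)))
        = t ^ a * Real.exp (-(z.re * t)) := by rw [← mul_assoc, hrw]
      _ ≤ t ^ a * Real.exp (-(b.re / 2 * t)) := by
          refine mul_le_mul_of_nonneg_left ?_ (Real.rpow_nonneg ht.le _)
          refine Real.exp_le_exp.mpr ?_
          have := mul_le_mul_of_nonneg_right hzre ht'.le
          linarith
      _ = t ^ a * Real.exp (-(b.re / 2) * t) := by rw [neg_mul]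
  · -- bound integrable
    have := integrableOn_rpow_mul_exp_neg_mul_rpow (s := a) (p := 1) (b := b.re / 2)
      (by linarith) one_pos hε
    have h' : IntegrableOn (fun t : ℝ => t ^ a * Real.exp (-(b.re / 2) * t)) (Set.Ioi 0) := by
      simpa [Real.rpow_one] using this
    exact h'
  · -- differentiability
    filter_upwards [ae_restrict_mem measurableSet_Ioi] with t ht
    intro z hz
    have h1 : HasDerivAt (fun z : ℂ => -(z * (t:ℂ))) (-(1 * (t:ℂ))) z :=
      ((hasDerivAt_id z).mul_const ((t:ℝ):ℂ)).neg
    have h2 := h1.cexp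
    have h3 := h2.const_mul (((t ^ (a - 1) : ℝ) : ℂ))
    convert h3 using 1
    · rfl
    simp [hF']
    ring

lemma lap_real (a : ℝ) (ha : 0 < a) {r : ℝ} (hr : 0 < r) :
    lapInt a r = Complex.Gamma a * (r : ℂ) ^ (-(a : ℂ)) := by
  have h := Complex.integral_cpow_mul_exp_neg_mul_Ioi (a := (a : ℂ)) (r := r)
    (by simpa using ha) hr
  have hcongr : lapInt a r
      = ∫ t : ℝ in Set.Ioi 0, (t : ℂ) ^ ((a : ℂ) - 1) * Complex.exp (-((r : ℂ) * t)) := by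
    refine setIntegral_congr_fun measurableSet_Ioi fun t ht => ?_
    have : ((t ^ (a - 1) : ℝ) : ℂ) = (t : ℂ) ^ ((a : ℂ) - 1) := by
      rw [Complex.ofReal_cpow (le_of_lt ht)]
      push_cast
      ring_nf
    rw [this]
  rw [hcongr, h]
  rw [Complex.cpow_neg, one_div, Complex.inv_cpow _ _ ?_, mul_comm]
  rw [Complex.arg_ofReal_of_nonneg hr.le]
  exact Real.pi_ne_zero.symm

lemma lap_eq (a : ℝ) (ha : 0 < a) {b : ℂ} (hb : 0 < b.re) :
    lapInt a b = Complex.Gamma a * b ^ (-(a : ℂ)) := by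
  set U : Set ℂ := {z | 0 < z.re} with hU
  have hUopen : IsOpen U := isOpen_lt continuous_const Complex.continuous_re
  have hUconv : Convex ℝ U := convex_halfSpace_re_gt 0
  have hF : AnalyticOnNhd ℂ (lapInt a) U := by
    refine DifferentiableOn.analyticOnNhd (fun z hz => ?_) hUopen
    exact (lap_hasDerivAt a ha hz).differentiableAt.differentiableWithinAt
  have hG : AnalyticOnNhd ℂ (fun z : ℂ => Complex.Gamma a * z ^ (-(a : ℂ))) U := by
    refine DifferentiableOn.analyticOnNhd (fun z hz => ?_) hUopen
    refine (((differentiableAt_id.cpow (differentiableAt_const _) ?_)).const_mul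
      _).differentiableWithinAt
    exact Or.inl hz
  have h1 : (1 : ℂ) ∈ U := by simp [hU]
  have hfreq : ∃ᶠ z in nhdsWithin (1 : ℂ) {(1 : ℂ)}ᶜ,
      lapInt a z = Complex.Gamma a * z ^ (-(a : ℂ)) := by
    have hseq : Tendsto (fun n : ℕ => ((1 + ((n : ℝ) + 1)⁻¹ : ℝ) : ℂ)) atTop
        (nhdsWithin (1 : ℂ) {(1 : ℂ)}ᶜ) := by
      rw [tendsto_nhdsWithin_iff]
      constructor
      · have : Tendsto (fun n : ℕ => (1 + ((n : ℝ) + 1)⁻¹ : ℝ)) atTop (nhds 1) := by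
          have := tendsto_one_div_add_atTop_nhds_zero_nat (𝕜 := ℝ)
          simp only [one_div] at this
          simpa using tendsto_const_nhds.add this
        have h2 := (Complex.continuous_ofReal.tendsto 1).comp this
        rw [show ((1:ℝ):ℂ) = 1 from rfl] at h2
        exact h2
      · refine Eventually.of_forall fun n => ?_
        simp only [Set.mem_compl_iff, Set.mem_singleton_iff]
        intro h
        have : (1 + ((n : ℝ) + 1)⁻¹ : ℝ) = 1 := by exact_mod_cast h
        have hpos : (0:ℝ) < ((n : ℝ) + 1)⁻¹ := by positivity
        linarith
    refine hseq.frequently (Frequently.of_forall fun n => ?_)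
    have hrpos : (0:ℝ) < 1 + ((n : ℝ) + 1)⁻¹ := by positivity
    exact lap_real a ha hrpos
  exact hF.eqOn_of_preconnected_of_frequently_eq hG hUconv.isPreconnected h1 hfreq hb

lemma osc_sub (σ δ : ℝ) (hσ : 0 < σ) (hδ : -1 < δ) (b : ℂ) :
    ∫ r in Set.Ioi (0 : ℝ), Complex.exp (-(b * ((r ^ σ : ℝ) : ℂ))) * ((r ^ δ : ℝ) : ℂ)
      = (1 / (σ : ℂ)) * lapInt ((δ + 1) / σ) b := by
  set a : ℝ := (δ + 1) / σ with ha
  have h := integral_comp_rpow_Ioi_of_pos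
    (g := fun y : ℝ => ((y ^ (a - 1) : ℝ) : ℂ) * Complex.exp (-(b * y))) hσ
  have hcongr : ∀ x ∈ Set.Ioi (0:ℝ),
      (σ * x ^ (σ - 1)) • (((((x ^ σ) ^ (a - 1) : ℝ)) : ℂ) * Complex.exp (-(b * ((x ^ σ : ℝ) : ℂ))))
        = (σ : ℂ) * (Complex.exp (-(b * ((x ^ σ : ℝ) : ℂ))) * ((x ^ δ : ℝ) : ℂ)) := by
    intro x hx
    have hx' : (0:ℝ) < x := hx
    have h1 : ((x ^ σ) ^ (a - 1) : ℝ) = x ^ (δ + 1 - σ) := by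
      rw [← Real.rpow_mul hx'.le]
      congr 1
      rw [ha]
      field_simp
    have h2 : x ^ (σ - 1) * x ^ (δ + 1 - σ) = x ^ δ := by
      rw [← Real.rpow_add hx']
      ring_nf
    have h2c : ((x ^ δ : ℝ) : ℂ) = ((x ^ (σ - 1) : ℝ) : ℂ) * ((x ^ (δ + 1 - σ) : ℝ) : ℂ) := by
      rw [← Complex.ofReal_mul, h2]
    rw [h1, real_smul, h2c]
    push_cast
    ring
  have keyσ : lapInt a b
      = (σ : ℂ) * ∫ r in Set.Ioi (0 : ℝ),
          Complex.exp (-(b * ((r ^ σ : ℝ) : ℂ))) * ((r ^ δ : ℝ) : ℂ) := by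
    rw [lapInt, ← h, setIntegral_congr_fun measurableSet_Ioi hcongr, integral_const_mul]
  rw [keyσ]
  have hσc : (σ : ℂ) ≠ 0 := Complex.ofReal_ne_zero.mpr hσ.ne'
  rw [← mul_assoc, one_div, inv_mul_cancel₀ hσc, one_mul]

/-- For `σ > 0`, `c ≠ 0`, `δ > −1`, the regularized oscillatory integral
`∫_0^∞ e^{icr^σ} r^δ dr`, defined as the limit `ε → 0⁺` of
`∫_0^∞ e^{(ic−ε)r^σ} r^δ dr`, equals `(1/σ)·Γ((δ+1)/σ)/(−ic)^{(δ+1)/σ}` (principal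
branch). -/
theorem oscillatory_power_integral (σ δ c : ℝ) (hσ : 0 < σ) (hδ : -1 < δ) (hc : c ≠ 0) :
    Tendsto (fun ε : ℝ =>
        ∫ r in Set.Ioi (0 : ℝ),
          Complex.exp ((Complex.I * c - ε) * (r ^ σ : ℝ)) * ((r ^ δ : ℝ) : ℂ))
      (nhdsWithin 0 (Set.Ioi 0))
      (nhds ((1 / (σ : ℂ)) * Complex.Gamma (((δ + 1) / σ : ℝ)) /
        (-Complex.I * c) ^ (((δ + 1) / σ : ℝ) : ℂ))) := by
  set a : ℝ := (δ + 1) / σ with ha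
  have hapos : 0 < a := div_pos (by linarith) hσ
  have hslit : -Complex.I * (c : ℂ) ∈ Complex.slitPlane := by
    right
    simp [Complex.mul_im, hc]
  -- the limit function
  have htends : Tendsto (fun ε : ℝ =>
      (1 / (σ : ℂ)) * (Complex.Gamma a * ((ε : ℂ) - Complex.I * c) ^ (-(a : ℂ))))
      (nhdsWithin 0 (Set.Ioi 0))
      (nhds ((1 / (σ : ℂ)) * (Complex.Gamma a * (-Complex.I * c) ^ (-(a : ℂ))))) := by
    have h1 : Tendsto (fun ε : ℝ => (ε : ℂ) - Complex.I * c) (nhdsWithin 0 (Set.Ioi 0))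
        (nhds (-Complex.I * c)) := by
      have hcont : Continuous fun ε : ℝ => (ε : ℂ) - Complex.I * c := by continuity
      have := hcont.tendsto 0
      simp only [Complex.ofReal_zero, zero_sub, ← neg_mul] at this
      exact this.mono_left nhdsWithin_le_nhds
    have h2 : ContinuousAt (fun z : ℂ => z ^ (-(a : ℂ))) (-Complex.I * c) :=
      continuousAt_cpow_const hslit
    exact ((h2.tendsto.comp h1).const_mul _).const_mul _
  have heq : (fun ε : ℝ =>
      ∫ r in Set.Ioi (0 : ℝ),
        Complex.exp ((Complex.I * c - ε) * (r ^ σ : ℝ)) * ((r ^ δ : ℝ) : ℂ))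
      =ᶠ[nhdsWithin (0:ℝ) (Set.Ioi 0)]
      (fun ε : ℝ =>
      (1 / (σ : ℂ)) * (Complex.Gamma a * ((ε : ℂ) - Complex.I * c) ^ (-(a : ℂ)))) := by
    filter_upwards [self_mem_nhdsWithin] with ε hε
    have hεpos : (0:ℝ) < ε := hε
    have hre : (0:ℝ) < ((ε : ℂ) - Complex.I * c).re := by
      simp [Complex.sub_re, Complex.mul_re, hεpos]
    have hfun : ∀ r : ℝ,
        Complex.exp ((Complex.I * c - ε) * (r ^ σ : ℝ)) * ((r ^ δ : ℝ) : ℂ)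
          = Complex.exp (-(((ε : ℂ) - Complex.I * c) * ((r ^ σ : ℝ) : ℂ))) * ((r ^ δ : ℝ) : ℂ) := by
      intro r
      congr 2
      ring
    calc ∫ r in Set.Ioi (0 : ℝ),
          Complex.exp ((Complex.I * c - ε) * (r ^ σ : ℝ)) * ((r ^ δ : ℝ) : ℂ)
        = ∫ r in Set.Ioi (0 : ℝ),
          Complex.exp (-(((ε : ℂ) - Complex.I * c) * ((r ^ σ : ℝ) : ℂ))) * ((r ^ δ : ℝ) : ℂ) := by
          simp_rw [hfun]
      _ = (1 / (σ : ℂ)) * lapInt a ((ε : ℂ) - Complex.I * c) := osc_sub σ δ hσ hδ _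
      _ = (1 / (σ : ℂ)) * (Complex.Gamma a * ((ε : ℂ) - Complex.I * c) ^ (-(a : ℂ))) := by
          rw [lap_eq a hapos hre]
  have hL : (1 / (σ : ℂ)) * (Complex.Gamma a * (-Complex.I * c) ^ (-(a : ℂ)))
      = (1 / (σ : ℂ)) * Complex.Gamma (((δ + 1) / σ : ℝ))
        / (-Complex.I * c) ^ (((δ + 1) / σ : ℝ) : ℂ) := by
    rw [Complex.cpow_neg]
    ring
  rw [← hL]
  exact htends.congr' heq.symm
end
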